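/- Let n ≥ 2 and 0 < r < R. There exists a constant K₁ = K₁(n,r,R) > 0 such that for all sets E₁, E₂ ∈ S_{r,R} one has d_H(E₁,E₂)^{n+1} ≤ K₁ · d̃²(E₁,E₂) and d_H(E₁,E₂)^{n+1} ≤ K₁ · d̃²(E₂,E₁). -/

import Mathlib

open MeasureTheory Metric Set
open scoped ENNReal symmDiff

noncomputable section

/-- `Ω` is a bounded open set, star-shaped with respect to the ball `B_r(0)`. -/
def StarShaped (n : ℕ) (r : ℝ) (Ω : Set (EuclideanSpace ℝ (Fin n))) : Prop :=
  IsOpen Ω ∧ Bornology.IsBounded Ω ∧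
    ∀ y ∈ ball (0 : EuclideanSpace ℝ (Fin n)) r, ∀ x ∈ Ω, segment ℝ y x ⊆ Ω

/-- `Ω ∈ S_{r,R}`: star-shaped with respect to `B_r(0)` and contained in `B_R(0)`. -/
def SrR (n : ℕ) (r R : ℝ) (Ω : Set (EuclideanSpace ℝ (Fin n))) : Prop :=
  StarShaped n r Ω ∧ Ω ⊆ ball 0 R

/-- The square of the pseudo-distance: `d̃(F,E)² = ∫_{E Δ F} dist(x,∂E) dx`. -/
def tildeDistSq (n : ℕ) (F E : Set (EuclideanSpace ℝ (Fin n))) : ℝ :=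
  ∫ x in (E ∆ F), infDist x (frontier E)

namespace StmtAux

variable {n : ℕ} {r R : ℝ}

lemma cone_subset {Ω : Set (EuclideanSpace ℝ (Fin n))} (hΩ : StarShaped n r Ω)
    {x : EuclideanSpace ℝ (Fin n)} (hx : x ∈ Ω) {t : ℝ} (ht0 : 0 < t) (ht1 : t ≤ 1) :
    ball ((1-t) • x) (t*r) ⊆ Ω := by
  intro z hz
  have hy : t⁻¹ • (z - (1-t) • x) ∈ ball (0 : EuclideanSpace ℝ (Fin n)) r := by
    rw [mem_ball_zero_iff, norm_smul, norm_inv, Real.norm_of_nonneg ht0.le]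
    rw [mem_ball, dist_eq_norm] at hz
    calc t⁻¹ * ‖z - (1-t) • x‖ < t⁻¹ * (t*r) :=
          mul_lt_mul_of_pos_left hz (inv_pos.mpr ht0)
      _ = r := by field_simp
  refine hΩ.2.2 _ hy x hx ⟨t, 1-t, ht0.le, by linarith, by ring, ?_⟩
  rw [smul_smul, mul_inv_cancel₀ ht0.ne', one_smul, sub_add_cancel]

lemma frontier_facts (hn : 1 ≤ n) (hR : 0 < R) {Ω : Set (EuclideanSpace ℝ (Fin n))}
    (h : SrR n r R Ω) (hne : Ω.Nonempty) :
    (frontier Ω).Nonempty ∧ frontier Ω ⊆ closedBall (0 : EuclideanSpace ℝ (Fin n)) R := by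
  haveI : Nonempty (Fin n) := Fin.pos_iff_nonempty.mp hn
  constructor
  · rw [nonempty_frontier_iff]
    refine ⟨hne, fun huniv => ?_⟩
    obtain ⟨x, hx⟩ := exists_norm_eq (EuclideanSpace ℝ (Fin n)) (le_of_lt hR)
    have : x ∈ ball (0 : EuclideanSpace ℝ (Fin n)) R := h.2 (huniv ▸ mem_univ x)
    rw [mem_ball_zero_iff, hx] at this
    exact lt_irrefl _ this
  · exact frontier_subset_closure.trans
      ((closure_mono h.2).trans closure_ball_subset_closedBall)

lemma zero_mem (hr : 0 < r) {Ω : Set (EuclideanSpace ℝ (Fin n))}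
    (h : SrR n r R Ω) (hne : Ω.Nonempty) : (0 : EuclideanSpace ℝ (Fin n)) ∈ Ω := by
  obtain ⟨x₀, hx₀⟩ := hne
  exact h.1.2.2 0 (mem_ball_self hr) x₀ hx₀ (left_mem_segment ℝ _ _)

lemma integrableOn_infDist (hR : 0 < R) {S F : Set (EuclideanSpace ℝ (Fin n))}
    (hS : MeasurableSet S) (hSR : S ⊆ ball 0 R) (hFne : (frontier F).Nonempty)
    (hFR : frontier F ⊆ closedBall (0 : EuclideanSpace ℝ (Fin n)) R) :
    IntegrableOn (fun z => infDist z (frontier F)) S := by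
  apply Measure.integrableOn_of_bounded (M := 2*R)
  · exact ((measure_mono hSR).trans_lt measure_ball_lt_top).ne
  · exact (continuous_infDist_pt _).aestronglyMeasurable
  · refine (ae_restrict_iff' hS).mpr (Filter.Eventually.of_forall fun z hz => ?_)
    obtain ⟨y₀, hy₀⟩ := hFne
    rw [Real.norm_of_nonneg infDist_nonneg]
    have h1 : dist z 0 < R := mem_ball.mp (hSR hz)
    have h2 : dist 0 y₀ ≤ R := by
      have := mem_closedBall.mp (hFR hy₀); rwa [dist_comm]
    calc infDist z (frontier F) ≤ dist z y₀ := infDist_le_dist_of_mem hy₀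
      _ ≤ dist z 0 + dist 0 y₀ := dist_triangle _ _ _
      _ ≤ 2*R := by linarith

lemma integral_ge (hn : 1 ≤ n) (hR : 0 < R) {S F : Set (EuclideanSpace ℝ (Fin n))}
    (hS : MeasurableSet S) (hSR : S ⊆ ball 0 R) (hFne : (frontier F).Nonempty)
    (hFR : frontier F ⊆ closedBall (0 : EuclideanSpace ℝ (Fin n)) R)
    {y : EuclideanSpace ℝ (Fin n)} {ρ m : ℝ} (hρ : 0 ≤ ρ) (hm : 0 ≤ m)
    (hball : ball y ρ ⊆ S)
    (hlow : ∀ z ∈ ball y ρ, m ≤ infDist z (frontier F)) :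
    m * (ρ ^ n * (volume (ball (0 : EuclideanSpace ℝ (Fin n)) 1)).toReal) ≤
      ∫ z in S, infDist z (frontier F) := by
  haveI : Nonempty (Fin n) := Fin.pos_iff_nonempty.mp hn
  have hInt := integrableOn_infDist hR hS hSR hFne hFR
  have hvol : (volume (ball y ρ)).toReal
      = ρ ^ n * (volume (ball (0 : EuclideanSpace ℝ (Fin n)) 1)).toReal := by
    rw [Measure.addHaar_ball (μ := (volume : Measure (EuclideanSpace ℝ (Fin n)))) y hρ,
      finrank_euclideanSpace_fin, ENNReal.toReal_mul, ENNReal.toReal_ofReal (by positivity)]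
  have h2 : m * (volume (ball y ρ)).toReal ≤ ∫ z in ball y ρ, infDist z (frontier F) :=
    setIntegral_ge_of_const_le_real measurableSet_ball
      (measure_ball_lt_top).ne hlow (hInt.mono_set hball)
  have h1 : ∫ z in ball y ρ, infDist z (frontier F) ≤ ∫ z in S, infDist z (frontier F) :=
    setIntegral_mono_set hInt (Filter.Eventually.of_forall fun z => infDist_nonneg)
      (HasSubset.Subset.eventuallyLE hball)
  rw [← hvol]
  exact h2.trans h1

lemma main_aux (hn : 1 ≤ n) (hr : 0 < r) (hrR : r < R)
    {A B : Set (EuclideanSpace ℝ (Fin n))} (hA : SrR n r R A) (hB : SrR n r R B)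
    (hBne : B.Nonempty) {x : EuclideanSpace ℝ (Fin n)} (hx : x ∈ A) {δ : ℝ}
    (hδ : 0 < δ) (hδR : δ ≤ R) (hfar : δ/2 < infDist x B) :
    (δ * (r/(16*R))) ^ (n+1) * (volume (ball (0 : EuclideanSpace ℝ (Fin n)) 1)).toReal ≤
        ∫ z in A ∆ B, infDist z (frontier A) ∧
    (δ * (r/(16*R))) ^ (n+1) * (volume (ball (0 : EuclideanSpace ℝ (Fin n)) 1)).toReal ≤
        ∫ z in A ∆ B, infDist z (frontier B) := by
  have hR : 0 < R := hr.trans hrR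
  set t : ℝ := δ/(8*R) with ht_def
  have ht0 : 0 < t := by positivity
  have ht1 : t ≤ 1 := by
    rw [ht_def, div_le_one (by positivity)]; nlinarith
  set y : EuclideanSpace ℝ (Fin n) := (1-t) • x with hy_def
  set ρ : ℝ := δ * (r/(16*R)) with hρ_def
  have hρ0 : 0 < ρ := by positivity
  have hρt : ρ = t*r/2 := by rw [hρ_def, ht_def]; ring
  have hρlt : ρ < t*r := by rw [hρt]; nlinarith
  have hcone : ball y (t*r) ⊆ A := cone_subset hA.1 hx ht0 ht1
  have hballA : ball y ρ ⊆ A := (ball_subset_ball hρlt.le).trans hcone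
  have hxR : ‖x‖ < R := mem_ball_zero_iff.mp (hA.2 hx)
  have hdyx : dist y x ≤ t*R := by
    rw [hy_def, dist_eq_norm]
    have : (1-t) • x - x = (-t) • x := by module
    rw [this, norm_smul, norm_neg, Real.norm_of_nonneg ht0.le]
    exact mul_le_mul_of_nonneg_left hxR.le ht0.le
  -- basic distance bound for points of the small ball
  have hdzx : ∀ z ∈ ball y ρ, dist z x < δ/4 := by
    intro z hz
    have h1 : dist z y < ρ := mem_ball.mp hz
    have h2 : ρ ≤ δ/16 := by
      rw [hρ_def]
      have : r/(16*R) ≤ 1/16 := by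
        rw [div_le_div_iff₀ (by positivity) (by norm_num)]; nlinarith
      nlinarith
    have h3 : t*R = δ/8 := by rw [ht_def]; field_simp
    calc dist z x ≤ dist z y + dist y x := dist_triangle _ _ _
      _ < ρ + t*R := by linarith [hdyx]
      _ ≤ δ/16 + δ/8 := by linarith
      _ < δ/4 := by linarith
  have hfB := frontier_facts hn hR hB hBne
  have hfA := frontier_facts hn hR hA ⟨x, hx⟩
  -- points of the small ball are far from B (hence outside B)
  have hfarB : ∀ z ∈ ball y ρ, δ/4 < infDist z B := by
    intro z hz
    have := infDist_le_infDist_add_dist (x := x) (y := z) (s := B)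
    have := hdzx z hz
    rw [dist_comm] at this
    linarith [infDist_le_infDist_add_dist (x := x) (y := z) (s := B)]
  have hnotB : ∀ z ∈ ball y ρ, z ∉ B := by
    intro z hz hzB
    have := hfarB z hz
    rw [infDist_zero_of_mem hzB] at this
    linarith
  have hsub : ball y ρ ⊆ A ∆ B := fun z hz =>
    Set.mem_symmDiff.mpr (Or.inl ⟨hballA hz, hnotB z hz⟩)
  -- lower bound for distance to frontier B
  have hlowB : ∀ z ∈ ball y ρ, ρ ≤ infDist z (frontier B) := by
    intro z hz
    have h1 : infDist z (closure B) ≤ infDist z (frontier B) :=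
      infDist_le_infDist_of_subset frontier_subset_closure hfB.1
    rw [infDist_closure] at h1
    have h2 : ρ ≤ δ/4 := by
      have h3 : t*R = δ/8 := by rw [ht_def]; field_simp
      rw [hρt]; nlinarith
    linarith [hfarB z hz]
  -- lower bound for distance to frontier A
  have hlowA : ∀ z ∈ ball y ρ, ρ ≤ infDist z (frontier A) := by
    intro z hz
    by_contra hcon
    push_neg at hcon
    obtain ⟨w, hw, hdw⟩ := (infDist_lt_iff hfA.1).mp hcon
    have hwA : w ∉ A := by
      rw [hA.1.1.frontier_eq] at hw
      exact hw.2
    have hwball : w ∉ ball y (t*r) := fun hc => hwA (hcone hc)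
    have : t*r ≤ dist w y := le_of_not_gt (fun hc => hwball (mem_ball.mpr hc))
    have hzy : dist z y < ρ := mem_ball.mp hz
    have : dist w y ≤ dist w z + dist z y := dist_triangle _ _ _
    rw [dist_comm w z] at this
    have : t*r - ρ < ρ := by linarith
    rw [hρt] at this
    linarith
  -- S is measurable and contained in the big ball
  have hSmeas : MeasurableSet (A ∆ B) :=
    (hA.1.1.measurableSet.diff hB.1.1.measurableSet).union
      (hB.1.1.measurableSet.diff hA.1.1.measurableSet)
  have hSR : A ∆ B ⊆ ball 0 R := by
    intro z hz
    rcases Set.mem_symmDiff.mp hz with ⟨h, _⟩ | ⟨h, _⟩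
    · exact hA.2 h
    · exact hB.2 h
  have hpow : (δ * (r/(16*R))) ^ (n+1) *
      (volume (ball (0 : EuclideanSpace ℝ (Fin n)) 1)).toReal
      = ρ * (ρ ^ n * (volume (ball (0 : EuclideanSpace ℝ (Fin n)) 1)).toReal) := by
    rw [← hρ_def, pow_succ]; ring
  constructor
  · rw [hpow]
    exact integral_ge hn hR hSmeas hSR hfA.1 hfA.2 hρ0.le hρ0.le hsub hlowA
  · rw [hpow]
    exact integral_ge hn hR hSmeas hSR hfB.1 hfB.2 hρ0.le hρ0.le hsub hlowB

end StmtAux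

/-- For `n ≥ 2` and `0 < r < R` there is a constant `K₁ = K₁(n,r,R) > 0` such that for all
`E₁, E₂ ∈ S_{r,R}`, `d_H(E₁,E₂)^{n+1} ≤ K₁ d̃²(E₁,E₂)` and
`d_H(E₁,E₂)^{n+1} ≤ K₁ d̃²(E₂,E₁)`. -/
theorem statement0 (n : ℕ) (hn : 2 ≤ n) (r R : ℝ) (hr : 0 < r) (hrR : r < R) :
    ∃ K₁ : ℝ, 0 < K₁ ∧ ∀ E₁ E₂ : Set (EuclideanSpace ℝ (Fin n)),
      SrR n r R E₁ → SrR n r R E₂ →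
      hausdorffDist E₁ E₂ ^ (n + 1) ≤ K₁ * tildeDistSq n E₁ E₂ ∧
      hausdorffDist E₁ E₂ ^ (n + 1) ≤ K₁ * tildeDistSq n E₂ E₁ := by
  have hn1 : 1 ≤ n := le_trans one_le_two hn
  haveI : Nonempty (Fin n) := Fin.pos_iff_nonempty.mp hn1
  have hR : 0 < R := hr.trans hrR
  set ω : ℝ := (volume (ball (0 : EuclideanSpace ℝ (Fin n)) 1)).toReal with hω_def
  have hω : 0 < ω :=
    ENNReal.toReal_pos (measure_ball_pos _ _ one_pos).ne' measure_ball_lt_top.ne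
  set c : ℝ := r/(16*R) with hc_def
  have hc : 0 < c := by positivity
  refine ⟨(c ^ (n+1) * ω)⁻¹, by positivity, fun E₁ E₂ h₁ h₂ => ?_⟩
  set δ : ℝ := hausdorffDist E₁ E₂ with hδ_def
  have hδ0 : 0 ≤ δ := hausdorffDist_nonneg
  have htnn1 : 0 ≤ tildeDistSq n E₁ E₂ := integral_nonneg fun z => infDist_nonneg
  have htnn2 : 0 ≤ tildeDistSq n E₂ E₁ := integral_nonneg fun z => infDist_nonneg
  rcases eq_or_lt_of_le hδ0 with hδz | hδpos
  · rw [← hδz, zero_pow (Nat.succ_ne_zero n)]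
    constructor <;> positivity
  -- δ > 0, so both sets are nonempty
  have hne₁ : E₁.Nonempty := by
    rcases E₁.eq_empty_or_nonempty with h | h
    · exfalso; rw [hδ_def, h, hausdorffDist_empty'] at hδpos; exact lt_irrefl _ hδpos
    · exact h
  have hne₂ : E₂.Nonempty := by
    rcases E₂.eq_empty_or_nonempty with h | h
    · exfalso; rw [hδ_def, h, hausdorffDist_empty] at hδpos; exact lt_irrefl _ hδpos
    · exact h
  have h0₁ : (0 : EuclideanSpace ℝ (Fin n)) ∈ E₁ := StmtAux.zero_mem hr h₁ hne₁
  have h0₂ : (0 : EuclideanSpace ℝ (Fin n)) ∈ E₂ := StmtAux.zero_mem hr h₂ hne₂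
  have hδR : δ ≤ R := by
    apply hausdorffDist_le_of_infDist hR.le
    · intro x hx
      exact (infDist_le_dist_of_mem h0₂).trans (mem_ball.mp (h₁.2 hx)).le
    · intro x hx
      exact (infDist_le_dist_of_mem h0₁).trans (mem_ball.mp (h₂.2 hx)).le
  have key : (∃ x ∈ E₁, δ/2 < infDist x E₂) ∨ (∃ x ∈ E₂, δ/2 < infDist x E₁) := by
    by_contra hcon
    push_neg at hcon
    have := hausdorffDist_le_of_infDist (by positivity : (0:ℝ) ≤ δ/2)
      (fun x hx => hcon.1 x hx) (fun x hx => hcon.2 x hx)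
    rw [← hδ_def] at this
    linarith
  -- from the integral lower bounds conclude
  have final : ∀ I : ℝ, (δ * c) ^ (n+1) * ω ≤ I → δ ^ (n+1) ≤ (c ^ (n+1) * ω)⁻¹ * I := by
    intro I hI
    rw [mul_pow] at hI
    have h1 : δ ^ (n+1) = (c ^ (n+1) * ω)⁻¹ * (δ ^ (n+1) * c ^ (n+1) * ω) := by
      field_simp
    rw [h1]
    exact mul_le_mul_of_nonneg_left (by linarith) (by positivity)
  rcases key with ⟨x, hx, hfar⟩ | ⟨x, hx, hfar⟩
  · obtain ⟨hIA, hIB⟩ := StmtAux.main_aux hn1 hr hrR h₁ h₂ hne₂ hx hδpos hδR hfar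
    constructor
    · apply final
      rw [tildeDistSq, symmDiff_comm]
      exact hIB
    · apply final
      rw [tildeDistSq]
      exact hIA
  · obtain ⟨hIA, hIB⟩ := StmtAux.main_aux hn1 hr hrR h₂ h₁ hne₁ hx hδpos hδR hfar
    constructor
    · apply final
      rw [tildeDistSq]
      exact hIA
    · apply final
      rw [tildeDistSq, symmDiff_comm]
      exact hIB
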